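/- Let ε(X) = α₀X + α₁ with α₀ > 0, α₁ > 0. Fix h₁ > 0 and X₁ > 0 with ε(X₁)h₁ = Y_opt. Then for every X ∈ (X₁, α₁P(Y_opt)/(α₀ R Y_opt)), one has Π(X, h₁) > Π(X₁, h₁), where Π(X,h) = (X/ε(X))P(ε(X)h). -/
import Mathlib


open Real Set intervalIntegral

/-- Haldane growth rate. -/
noncomputable def haldane (μmax θ Istar I : ℝ) : ℝ :=
  μmax * I / (I + (μmax / θ) * (I / Istar - 1) ^ 2)

/-- Optical depth productivity P(Y) = ∫₀^Y (μ(I_s e^{−y}) − R) dy. -/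
noncomputable def opticalP (μmax θ Istar Is R Y : ℝ) : ℝ :=
  ∫ y in (0 : ℝ)..Y, (haldane μmax θ Istar (Is * Real.exp (-y)) - R)

/-- Surface productivity Π(X,h) = (X/ε(X))·P(ε(X)h) for ε(X) = α₀X + α₁. -/
noncomputable def surfProd (μmax θ Istar Is R α₀ α₁ X h : ℝ) : ℝ :=
  (X / (α₀ * X + α₁)) * opticalP μmax θ Istar Is R ((α₀ * X + α₁) * h)

lemma haldane_denom_pos (μmax θ Istar I : ℝ) (hμ : 0 < μmax) (hθ : 0 < θ)
    (hI : 0 < I) : 0 < I + (μmax / θ) * (I / Istar - 1) ^ 2 := by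
  have := div_pos hμ hθ
  positivity

lemma haldane_pos (μmax θ Istar I : ℝ) (hμ : 0 < μmax) (hθ : 0 < θ)
    (hI : 0 < I) : 0 < haldane μmax θ Istar I :=
  div_pos (by positivity) (haldane_denom_pos μmax θ Istar I hμ hθ hI)

lemma haldane_cont (μmax θ Istar Is R : ℝ) (hμ : 0 < μmax) (hθ : 0 < θ)
    (hIs : 0 < Is) :
    Continuous (fun y => haldane μmax θ Istar (Is * Real.exp (-y)) - R) := by
  have hg : Continuous (fun y : ℝ => Is * Real.exp (-y)) := by continuity
  have hgpos : ∀ y : ℝ, 0 < Is * Real.exp (-y) := fun y => by positivity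
  unfold haldane
  refine Continuous.sub (Continuous.div (by continuity) (by continuity) ?_) continuous_const
  intro y
  exact (haldane_denom_pos μmax θ Istar _ hμ hθ (hgpos y)).ne'

theorem stmt10 (μmax θ Istar Is R α₀ α₁ Yopt X₁ h₁ : ℝ)
    (hμ : 0 < μmax) (hθ : 0 < θ) (hI : 0 < Istar) (hIs : 0 < Is)
    (hR0 : 0 < R) (hR : R < μmax) (hsurf : R < haldane μmax θ Istar Is)
    (hα₀ : 0 < α₀) (hα₁ : 0 < α₁)
    (hYopt : 0 < Yopt)
    (heqμ : haldane μmax θ Istar (Is * Real.exp (-Yopt)) = R)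
    (hPpos : 0 < opticalP μmax θ Istar Is R Yopt)
    (hmax : ∀ Y ≥ 0, opticalP μmax θ Istar Is R Y ≤ opticalP μmax θ Istar Is R Yopt)
    (hX₁ : 0 < X₁) (hh₁ : 0 < h₁)
    (hopt : (α₀ * X₁ + α₁) * h₁ = Yopt) :
    ∀ X : ℝ, X₁ < X → X < α₁ * opticalP μmax θ Istar Is R Yopt / (α₀ * R * Yopt) →
      surfProd μmax θ Istar Is R α₀ α₁ X₁ h₁ < surfProd μmax θ Istar Is R α₀ α₁ X h₁ := by
  intro X hXX hXb
  set P := opticalP μmax θ Istar Is R Yopt with hP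
  set ε₁ := α₀ * X₁ + α₁ with hε₁def
  set ε := α₀ * X + α₁ with hεdef
  have hε₁ : 0 < ε₁ := by rw [hε₁def]; positivity
  have hε : 0 < ε := by rw [hεdef]; nlinarith
  set Y := ε * h₁ with hYdef
  have hYgt : Yopt < Y := by
    rw [← hopt]; exact mul_lt_mul_of_pos_right (by simp [hε₁def, hεdef]; nlinarith) hh₁
  have hcont := haldane_cont μmax θ Istar Is R hμ hθ hIs
  -- opticalP Y ≥ P - R * (Y - Yopt)
  have hsplit : opticalP μmax θ Istar Is R Y
      = P + ∫ y in Yopt..Y, (haldane μmax θ Istar (Is * Real.exp (-y)) - R) := by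
    rw [hP]
    unfold opticalP
    rw [intervalIntegral.integral_add_adjacent_intervals
      (hcont.intervalIntegrable _ _) (hcont.intervalIntegrable _ _)]
  have htail : (-R) * (Y - Yopt)
      ≤ ∫ y in Yopt..Y, (haldane μmax θ Istar (Is * Real.exp (-y)) - R) := by
    have h1 : (∫ y in Yopt..Y, (-R : ℝ))
        ≤ ∫ y in Yopt..Y, (haldane μmax θ Istar (Is * Real.exp (-y)) - R) := by
      apply intervalIntegral.integral_mono_on hYgt.le
        (intervalIntegrable_const) (hcont.intervalIntegrable _ _)
      intro y _
      have := haldane_pos μmax θ Istar (Is * Real.exp (-y)) hμ hθ (by positivity)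
      linarith
    simpa [mul_comm] using h1
  have hQ : P - R * (Y - Yopt) ≤ opticalP μmax θ Istar Is R Y := by
    rw [hsplit]; linarith
  -- bound on X
  have hb : X * (α₀ * R * Yopt) < α₁ * P := by
    have h0 : 0 < α₀ * R * Yopt := by positivity
    calc X * (α₀ * R * Yopt) < (α₁ * P / (α₀ * R * Yopt)) * (α₀ * R * Yopt) :=
          mul_lt_mul_of_pos_right hXb h0
      _ = α₁ * P := by field_simp
  -- final
  unfold surfProd
  rw [hopt]
  have hstep : X₁ / ε₁ * P < X / ε * (P - R * (Y - Yopt)) := by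
    rw [div_mul_eq_mul_div, div_mul_eq_mul_div, div_lt_div_iff₀ hε₁ hε]
    have hYopt' : Yopt = ε₁ * h₁ := hopt.symm
    rw [hYopt'] at hb ⊢
    rw [hε₁def] at hb
    rw [hYdef, hεdef, hε₁def]
    nlinarith [mul_pos (sub_pos.mpr hXX) (sub_pos.mpr hb), mul_pos hX₁ hh₁]
  calc X₁ / ε₁ * P < X / ε * (P - R * (Y - Yopt)) := hstep
    _ ≤ X / ε * opticalP μmax θ Istar Is R Y :=
        mul_le_mul_of_nonneg_left hQ (div_nonneg (by linarith) hε.le)
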